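/- Let f : ℝ^n → ℝ be differentiable with inf_z f(z) = 0, and let V : ℝ^n → [0, ∞) vanish at 0 with f being V-smooth. Let 0 < λ' < λ and ε ≥ 0, and suppose β ∈ ℝ^p is an ε-solution for λ and β' ∈ ℝ^p is an ε-solution for λ', with P_λ(β) and P_{λ'}(β') finite. Then V*(−∇f(Xβ')) ≤ f(Xβ) + ((λ + λ')/(λ − λ'))·ε, where V*(u) = sup_{w ∈ ℝ^n} (⟨u, w⟩ − V(w)). -/

import Mathlib

open scoped RealInnerProductSpace

noncomputable section

abbrev Vec (d : ℕ) := EuclideanSpace ℝ (Fin d)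

/-- Matrix–vector product, landing in Euclidean space. -/
def mv {a b : ℕ} (M : Matrix (Fin a) (Fin b) ℝ) (v : Vec b) : Vec a := WithLp.toLp 2 (M.mulVec v)

/-- Fenchel conjugate of a real-valued function, with values in `EReal`. -/
noncomputable def rconj {d : ℕ} (f : Vec d → ℝ) (u : Vec d) : EReal :=
  ⨆ x, ((⟪u, x⟫ - f x : ℝ) : EReal)

/-- Primal objective `P_λ(β) = f(Xβ) + λ Ω(β)`, with values in `EReal`. -/
noncomputable def Pfun {n p : ℕ} (X : Matrix (Fin n) (Fin p) ℝ)
    (f : Vec n → ℝ) (Ω : Vec p → EReal) (lam : ℝ) (b : Vec p) : EReal :=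
  ((f (mv X b) : ℝ) : EReal) + ((lam : ℝ) : EReal) * Ω b

/-- `β` is an `ε`-solution for `λ`: `P_λ(β) - inf P_λ ≤ ε`. -/
noncomputable def epsSolution {n p : ℕ} (X : Matrix (Fin n) (Fin p) ℝ)
    (f : Vec n → ℝ) (Ω : Vec p → EReal) (lam ε : ℝ) (β : Vec p) : Prop :=
  Pfun X f Ω lam β - (⨅ b, Pfun X f Ω lam b) ≤ (ε : EReal)

/-- Lemma: bounding the gradient along the path.
`f` is differentiable with `inf f = 0` and `V`-smooth; `0 < λ' < λ`;
`β` is an `ε`-solution for `λ` and `β'` an `ε`-solution for `λ'`, with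
`P_λ(β)` and `P_{λ'}(β')` finite.  Then
`V*(-∇f(Xβ')) ≤ f(Xβ) + ((λ + λ')/(λ - λ')) ε`. -/
theorem stmt9 {n p : ℕ} (X : Matrix (Fin n) (Fin p) ℝ)
    (f : Vec n → ℝ) (f' : Vec n → Vec n)
    (hdiff : ∀ x, HasGradientAt f (f' x) x)
    (hconv : ConvexOn ℝ Set.univ f)
    (hinf : IsGLB (Set.range f) 0)
    (V : Vec n → ℝ) (hV0 : V 0 = 0) (hVnn : ∀ u, 0 ≤ V u)
    (hsm : ∀ x z : Vec n, f z - f x - ⟪f' x, z - x⟫ ≤ V (z - x))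
    (Ω : Vec p → EReal)
    (lam lam' ε : ℝ) (hlam' : 0 < lam') (hll : lam' < lam) (hε : 0 ≤ ε)
    (β β' : Vec p)
    (hβ : epsSolution X f Ω lam ε β)
    (hβ' : epsSolution X f Ω lam' ε β')
    (hfin : ∃ r : ℝ, Pfun X f Ω lam β = (r : EReal))
    (hfin' : ∃ r : ℝ, Pfun X f Ω lam' β' = (r : EReal)) :
    rconj V (-(f' (mv X β'))) ≤
      ((f (mv X β) + ((lam + lam') / (lam - lam')) * ε : ℝ) : EReal) := by
  have hnn : ∀ y, 0 ≤ f y := fun y => hinf.1 ⟨y, rfl⟩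
  have hlam : 0 < lam := hlam'.trans hll
  -- extract finiteness of Ω β and Ω β'
  have hfinΩ : ∀ (l : ℝ), 0 < l → ∀ (b : Vec p) (r : ℝ),
      Pfun X f Ω l b = (r : EReal) → ∃ t : ℝ, Ω b = (t : EReal) := by
    intro l hl b r hr
    refine ⟨(Ω b).toReal, (EReal.coe_toReal ?_ ?_).symm⟩
    · intro h
      rw [Pfun, h, EReal.coe_mul_top_of_pos hl,
        EReal.add_top_of_ne_bot (EReal.coe_ne_bot _)] at hr
      exact EReal.coe_ne_top r hr.symm
    · intro h
      rw [Pfun, h, EReal.coe_mul_bot_of_pos hl, EReal.add_bot] at hr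
      exact EReal.coe_ne_bot r hr.symm
  obtain ⟨r, hr⟩ := hfin
  obtain ⟨r', hr'⟩ := hfin'
  obtain ⟨t, ht⟩ := hfinΩ lam hlam β r hr
  obtain ⟨t', ht'⟩ := hfinΩ lam' hlam' β' r' hr'
  have hPβ : Pfun X f Ω lam β = ((f (mv X β) + lam * t : ℝ) : EReal) := by
    rw [Pfun, ht, ← EReal.coe_mul, ← EReal.coe_add]
  have hPβ' : Pfun X f Ω lam' β' = ((f (mv X β') + lam' * t' : ℝ) : EReal) := by
    rw [Pfun, ht', ← EReal.coe_mul, ← EReal.coe_add]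
  have hPβ2 : Pfun X f Ω lam β' = ((f (mv X β') + lam * t' : ℝ) : EReal) := by
    rw [Pfun, ht', ← EReal.coe_mul, ← EReal.coe_add]
  have hPβ'2 : Pfun X f Ω lam' β = ((f (mv X β) + lam' * t : ℝ) : EReal) := by
    rw [Pfun, ht, ← EReal.coe_mul, ← EReal.coe_add]
  -- turn epsSolution into real inequalities
  have key : ∀ (l : ℝ) (b b' : Vec p) (u u' : ℝ),
      Pfun X f Ω l b = ((u : ℝ) : EReal) → Pfun X f Ω l b' = ((u' : ℝ) : EReal) →
      epsSolution X f Ω l ε b → u ≤ ε + u' := by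
    intro l b b' u u' hu hu' hsol
    rw [epsSolution, hu] at hsol
    have h1 : ((u : ℝ) : EReal) ≤ (ε : EReal) + (⨅ b, Pfun X f Ω l b) :=
      (EReal.sub_le_iff_le_add (Or.inr (EReal.coe_ne_top ε))
        (Or.inr (EReal.coe_ne_bot ε))).1 hsol
    have h2 : ((u : ℝ) : EReal) ≤ (ε : EReal) + ((u' : ℝ) : EReal) :=
      h1.trans (add_le_add_right ((iInf_le _ b').trans_eq hu') _)
    rw [← EReal.coe_add] at h2
    exact EReal.coe_le_coe_iff.1 h2
  have key1 : f (mv X β) + lam * t ≤ ε + (f (mv X β') + lam * t') :=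
    key lam β β' _ _ hPβ hPβ2 hβ
  have key2 : f (mv X β') + lam' * t' ≤ ε + (f (mv X β) + lam' * t) :=
    key lam' β' β _ _ hPβ' hPβ'2 hβ'
  -- bound f(Xβ') by f(Xβ) plus the error term
  have hd : (0 : ℝ) < lam - lam' := by linarith
  have hbound : f (mv X β') ≤ f (mv X β) + ((lam + lam') / (lam - lam')) * ε := by
    rw [div_mul_eq_mul_div, ← sub_le_iff_le_add', le_div_iff₀ hd]
    nlinarith [mul_le_mul_of_nonneg_left key1 hlam'.le,
      mul_le_mul_of_nonneg_left key2 hlam.le]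
  -- conclude via smoothness and nonnegativity of f
  rw [rconj]
  refine iSup_le fun w => EReal.coe_le_coe_iff.2 ?_
  have hs := hsm (mv X β') (mv X β' + w)
  rw [add_sub_cancel_left] at hs
  have hin : ⟪-(f' (mv X β')), w⟫ = -⟪f' (mv X β'), w⟫ := inner_neg_left (f' (mv X β')) w
  have h0 : 0 ≤ f (mv X β' + w) := hnn _
  rw [hin]
  linarith

end
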